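/- Let γ(u,t) be a one-parameter family of smooth pseudo null curves in E⁴₁ with speed v = ‖∂γ/∂u‖, pseudo null Frenet frame {T, N, B₁, B₂} with curvatures k₁ = 1, k₂, k₃, and flow ∂γ/∂t = α₁T + α₂N + α₃B₁ + α₄B₂. Then the flow is inextensible (i.e. ∂v/∂t = 0 for all u, t) if and only if ∂α₁/∂u = α₄ v. -/

import Mathlib

/-!
Formalization of inextensible flows of partially null / pseudo null curves in
Minkowski space-time `E⁴₁` (ℝ⁴ with signature (-,+,+,+)).
-/

noncomputable section

/-- The Minkowski bilinear form on `ℝ⁴` with signature `(-,+,+,+)`. -/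
def mink (v w : Fin 4 → ℝ) : ℝ :=
  -(v 0 * w 0) + v 1 * w 1 + v 2 * w 2 + v 3 * w 3

/-- The Minkowski norm `‖v‖ = √|⟨v,v⟩|`. -/
def mnorm (v : Fin 4 → ℝ) : ℝ := Real.sqrt |mink v v|

lemma mink_comm (x y : Fin 4 → ℝ) : mink x y = mink y x := by simp [mink]; ring

lemma mink_smul_left (a : ℝ) (x y : Fin 4 → ℝ) : mink (a • x) y = a * mink x y := by
  simp [mink]; ring

lemma mink_add_left (x y z : Fin 4 → ℝ) : mink (x + y) z = mink x z + mink y z := by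
  simp [mink]; ring

lemma mink_sub_left (x y z : Fin 4 → ℝ) : mink (x - y) z = mink x z - mink y z := by
  simp [mink]; ring

/-- Symmetry of mixed partial derivatives, packaged as a `HasDerivAt`. -/
lemma hasDerivAt_swap (F : ℝ → ℝ → (Fin 4 → ℝ))
    (hF : ContDiff ℝ (⊤ : ℕ∞) (fun p : ℝ × ℝ => F p.1 p.2)) (u t : ℝ) :
    HasDerivAt (fun x => deriv (fun y => F y x) u)
      (deriv (fun y => deriv (fun x => F y x) t) u) t := by
  set f : ℝ × ℝ → (Fin 4 → ℝ) := fun p => F p.1 p.2 with hfdef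
  have hdiff : Differentiable ℝ f := hF.differentiable (by simp)
  have hf' : ContDiff ℝ (⊤ : ℕ∞) (fderiv ℝ f) := hF.fderiv_right (by exact_mod_cast le_top)
  have key1 : ∀ a b : ℝ, HasDerivAt (fun y => F y b) (fderiv ℝ f (a, b) (1, 0)) a := by
    intro a b
    have h := (hdiff (a, b)).hasFDerivAt
    have hc : HasDerivAt (fun y : ℝ => (y, b)) ((1 : ℝ), (0 : ℝ)) a :=
      (hasDerivAt_id a).prodMk (hasDerivAt_const a b)
    exact h.comp_hasDerivAt a hc
  have key2 : ∀ a b : ℝ, HasDerivAt (fun x => F a x) (fderiv ℝ f (a, b) (0, 1)) b := by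
    intro a b
    have h := (hdiff (a, b)).hasFDerivAt
    have hc : HasDerivAt (fun x : ℝ => (a, x)) ((0 : ℝ), (1 : ℝ)) b :=
      (hasDerivAt_const b a).prodMk (hasDerivAt_id b)
    exact h.comp_hasDerivAt b hc
  have hF'' : HasFDerivAt (fderiv ℝ f) (fderiv ℝ (fderiv ℝ f) (u, t)) (u, t) :=
    ((hf'.differentiable (by simp)) (u, t)).hasFDerivAt
  set f'' := fderiv ℝ (fderiv ℝ f) (u, t) with hf''def
  have hsymm : ∀ p q : ℝ × ℝ, f'' p q = f'' q p :=
    second_derivative_symmetric (fun y => (hdiff y).hasFDerivAt) hF''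
  -- t-derivative of the u-partial
  have h1 : HasDerivAt (fun x => fderiv ℝ f (u, x)) (f'' (0, 1)) t := by
    have hc : HasDerivAt (fun x : ℝ => (u, x)) ((0 : ℝ), (1 : ℝ)) t :=
      (hasDerivAt_const t u).prodMk (hasDerivAt_id t)
    exact hF''.comp_hasDerivAt t hc
  have h2 : HasDerivAt (fun x => fderiv ℝ f (u, x) ((1 : ℝ), (0 : ℝ)))
      (f'' (0, 1) (1, 0)) t := by
    have := h1.clm_apply (hasDerivAt_const t ((1, 0) : ℝ × ℝ))
    simpa using this
  -- u-derivative of the t-partial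
  have h1' : HasDerivAt (fun y => fderiv ℝ f (y, t)) (f'' (1, 0)) u := by
    have hc : HasDerivAt (fun y : ℝ => (y, t)) ((1 : ℝ), (0 : ℝ)) u :=
      (hasDerivAt_id u).prodMk (hasDerivAt_const u t)
    exact hF''.comp_hasDerivAt u hc
  have h2' : HasDerivAt (fun y => fderiv ℝ f (y, t) ((0 : ℝ), (1 : ℝ)))
      (f'' (1, 0) (0, 1)) u := by
    have := h1'.clm_apply (hasDerivAt_const u ((0, 1) : ℝ × ℝ))
    simpa using this
  have e1 : (fun x => deriv (fun y => F y x) u) =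
      fun x => fderiv ℝ f (u, x) ((1 : ℝ), (0 : ℝ)) := by
    funext x; exact (key1 u x).deriv
  have e2 : (fun y => deriv (fun x => F y x) t) =
      fun y => fderiv ℝ f (y, t) ((0 : ℝ), (1 : ℝ)) := by
    funext y; exact (key2 y t).deriv
  rw [e1, e2, h2'.deriv, ← hsymm]
  exact h2

lemma mink_smul_smul (a : ℝ) (x y : Fin 4 → ℝ) : mink (a • x) (a • y) = a * a * mink x y := by
  simp [mink]; ring

lemma sliceD {X : Type*} [NormedAddCommGroup X] [NormedSpace ℝ X] (G : ℝ → ℝ → X)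
    (hG : ContDiff ℝ (⊤ : ℕ∞) (fun p : ℝ × ℝ => G p.1 p.2)) (u t : ℝ) :
    HasDerivAt (fun y => G y t) (deriv (fun y => G y t) u) u := by
  have h : ContDiff ℝ (⊤ : ℕ∞) (fun y : ℝ => G y t) :=
    hG.comp (contDiff_id.prodMk contDiff_const)
  exact ((h.differentiable (by simp)) u).hasDerivAt


theorem inextensible_iff_pseudo_null
    (γ T N B₁ B₂ : ℝ → ℝ → (Fin 4 → ℝ))
    (v k₁ k₂ k₃ α₁ α₂ α₃ α₄ : ℝ → ℝ → ℝ)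
    (hγsmooth : ContDiff ℝ (⊤ : ℕ∞) (fun p : ℝ × ℝ => γ p.1 p.2))
    (hTsmooth : ContDiff ℝ (⊤ : ℕ∞) (fun p : ℝ × ℝ => T p.1 p.2))
    (hNsmooth : ContDiff ℝ (⊤ : ℕ∞) (fun p : ℝ × ℝ => N p.1 p.2))
    (hB₁smooth : ContDiff ℝ (⊤ : ℕ∞) (fun p : ℝ × ℝ => B₁ p.1 p.2))
    (hB₂smooth : ContDiff ℝ (⊤ : ℕ∞) (fun p : ℝ × ℝ => B₂ p.1 p.2))
    (hk₂smooth : ContDiff ℝ (⊤ : ℕ∞) (fun p : ℝ × ℝ => k₂ p.1 p.2))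
    (hk₃smooth : ContDiff ℝ (⊤ : ℕ∞) (fun p : ℝ × ℝ => k₃ p.1 p.2))
    (hα₁smooth : ContDiff ℝ (⊤ : ℕ∞) (fun p : ℝ × ℝ => α₁ p.1 p.2))
    (hα₂smooth : ContDiff ℝ (⊤ : ℕ∞) (fun p : ℝ × ℝ => α₂ p.1 p.2))
    (hα₃smooth : ContDiff ℝ (⊤ : ℕ∞) (fun p : ℝ × ℝ => α₃ p.1 p.2))
    (hα₄smooth : ContDiff ℝ (⊤ : ℕ∞) (fun p : ℝ × ℝ => α₄ p.1 p.2))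
    (hTT : ∀ u t : ℝ, mink (T u t) (T u t) = 1)
    (hB₁B₁ : ∀ u t : ℝ, mink (B₁ u t) (B₁ u t) = 1)
    (hNN : ∀ u t : ℝ, mink (N u t) (N u t) = 0)
    (hB₂B₂ : ∀ u t : ℝ, mink (B₂ u t) (B₂ u t) = 0)
    (hNB₂ : ∀ u t : ℝ, mink (N u t) (B₂ u t) = 1)
    (hTN : ∀ u t : ℝ, mink (T u t) (N u t) = 0)
    (hTB₁ : ∀ u t : ℝ, mink (T u t) (B₁ u t) = 0)
    (hTB₂ : ∀ u t : ℝ, mink (T u t) (B₂ u t) = 0)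
    (hNB₁ : ∀ u t : ℝ, mink (N u t) (B₁ u t) = 0)
    (hB₁B₂ : ∀ u t : ℝ, mink (B₁ u t) (B₂ u t) = 0)
    -- speed, tangent and pseudo null Frenet equations (∂/∂s = (1/v)∂/∂u, k₁ = 1)
    (hk₁ : ∀ u t : ℝ, k₁ u t = 1)
    (hv : ∀ u t : ℝ, v u t = mnorm (deriv (fun x => γ x t) u))
    (hvpos : ∀ u t : ℝ, 0 < v u t)
    (hT : ∀ u t : ℝ, deriv (fun x => γ x t) u = v u t • T u t)
    (hfr₁ : ∀ u t : ℝ, deriv (fun x => T x t) u = (v u t * k₁ u t) • N u t)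
    (hfr₂ : ∀ u t : ℝ, deriv (fun x => N x t) u = (v u t * k₂ u t) • B₁ u t)
    (hfr₃ : ∀ u t : ℝ, deriv (fun x => B₁ x t) u =
      (v u t * k₃ u t) • N u t - (v u t * k₂ u t) • B₂ u t)
    (hfr₄ : ∀ u t : ℝ, deriv (fun x => B₂ x t) u =
      (v u t * -(k₁ u t)) • T u t - (v u t * k₃ u t) • B₁ u t)
    (hflow : ∀ u t : ℝ, deriv (fun x => γ u x) t =
      α₁ u t • T u t + α₂ u t • N u t + α₃ u t • B₁ u t + α₄ u t • B₂ u t) :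
    (∀ u t : ℝ, deriv (fun x => v u x) t = 0) ↔
      (∀ u t : ℝ, deriv (fun x => α₁ x t) u = α₄ u t * v u t) := by
  have key : ∀ u t : ℝ, deriv (fun x => v u x) t =
      deriv (fun x => α₁ x t) u - α₄ u t * v u t := by
    intro u t
    -- single-variable derivatives of the frame and coefficients in the u-direction
    have hdT : HasDerivAt (fun y => T y t) ((v u t * k₁ u t) • N u t) u := by
      have h := sliceD T hTsmooth u t; rwa [hfr₁ u t] at h
    have hdN : HasDerivAt (fun y => N y t) ((v u t * k₂ u t) • B₁ u t) u := by
      have h := sliceD N hNsmooth u t; rwa [hfr₂ u t] at h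
    have hdB₁ : HasDerivAt (fun y => B₁ y t)
        ((v u t * k₃ u t) • N u t - (v u t * k₂ u t) • B₂ u t) u := by
      have h := sliceD B₁ hB₁smooth u t; rwa [hfr₃ u t] at h
    have hdB₂ : HasDerivAt (fun y => B₂ y t)
        ((v u t * -(k₁ u t)) • T u t - (v u t * k₃ u t) • B₁ u t) u := by
      have h := sliceD B₂ hB₂smooth u t; rwa [hfr₄ u t] at h
    have hdα₁ := sliceD α₁ hα₁smooth u t
    have hdα₂ := sliceD α₂ hα₂smooth u t
    have hdα₃ := sliceD α₃ hα₃smooth u t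
    have hdα₄ := sliceD α₄ hα₄smooth u t
    -- the u-derivative of the flow field
    have hBIG : HasDerivAt
        (fun y => α₁ y t • T y t + α₂ y t • N y t + α₃ y t • B₁ y t + α₄ y t • B₂ y t)
        ((deriv (fun y => α₁ y t) u - α₄ u t * (v u t * k₁ u t)) • T u t +
         (α₁ u t * (v u t * k₁ u t) + deriv (fun y => α₂ y t) u
            + α₃ u t * (v u t * k₃ u t)) • N u t +
         (α₂ u t * (v u t * k₂ u t) + deriv (fun y => α₃ y t) u
            - α₄ u t * (v u t * k₃ u t)) • B₁ u t +
         (deriv (fun y => α₄ y t) u - α₃ u t * (v u t * k₂ u t)) • B₂ u t) u := by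
      have h := (((hdα₁.smul hdT).add (hdα₂.smul hdN)).add (hdα₃.smul hdB₁)).add
        (hdα₄.smul hdB₂)
      refine h.congr_deriv ?_
      simp only [hk₁]
      module
    set W : Fin 4 → ℝ :=
        (deriv (fun y => α₁ y t) u - α₄ u t * (v u t * k₁ u t)) • T u t +
        (α₁ u t * (v u t * k₁ u t) + deriv (fun y => α₂ y t) u
           + α₃ u t * (v u t * k₃ u t)) • N u t +
        (α₂ u t * (v u t * k₂ u t) + deriv (fun y => α₃ y t) u
           - α₄ u t * (v u t * k₃ u t)) • B₁ u t +
        (deriv (fun y => α₄ y t) u - α₃ u t * (v u t * k₂ u t)) • B₂ u t with hWdef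
    -- symmetry of mixed partials
    have hγut : HasDerivAt (fun x => deriv (fun y => γ y x) u) W t := by
      have h := hasDerivAt_swap γ hγsmooth u t
      have e : (fun y => deriv (fun x => γ y x) t) =
          (fun y => α₁ y t • T y t + α₂ y t • N y t + α₃ y t • B₁ y t + α₄ y t • B₂ y t) :=
        funext fun y => hflow y t
      rwa [e, hBIG.deriv] at h
    set γu : ℝ → (Fin 4 → ℝ) := fun x => deriv (fun y => γ y x) u with hγudef
    have hcomp : ∀ i, HasDerivAt (fun x => γu x i) (W i) t := hasDerivAt_pi.1 hγut
    -- derivative of the squared speed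
    have hQ : HasDerivAt (fun x => mink (γu x) (γu x)) (2 * mink W (γu t)) t := by
      have h := ((((((hcomp 0).mul (hcomp 0)).neg).add ((hcomp 1).mul (hcomp 1))).add
        ((hcomp 2).mul (hcomp 2))).add ((hcomp 3).mul (hcomp 3)))
      refine h.congr_deriv ?_
      simp only [mink]; ring
    have hQval : ∀ x : ℝ, mink (γu x) (γu x) = (v u x) ^ 2 := by
      intro x
      have := hT u x
      simp only [hγudef]
      rw [this, mink_smul_smul, hTT]
      ring
    have hvfun : (fun x => v u x) = fun x => Real.sqrt (mink (γu x) (γu x)) := by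
      funext x
      rw [hv u x]
      unfold mnorm
      congr 1
      have h1 : mink (γu x) (γu x) = (v u x) ^ 2 := hQval x
      simp only [hγudef] at h1
      rw [h1, abs_of_nonneg (sq_nonneg _)]
    have hQt : mink (γu t) (γu t) = (v u t) ^ 2 := hQval t
    have hQne : mink (γu t) (γu t) ≠ 0 := by
      rw [hQt]; exact (pow_pos (hvpos u t) 2).ne'
    have hsqrt : HasDerivAt (fun x => Real.sqrt (mink (γu x) (γu x)))
        ((2 * mink W (γu t)) / (2 * Real.sqrt (mink (γu t) (γu t)))) t :=
      hQ.sqrt hQne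
    have hsq : Real.sqrt (mink (γu t) (γu t)) = v u t := by
      rw [hQt, Real.sqrt_sq (hvpos u t).le]
    -- compute mink W (γu t)
    have hγuT : γu t = v u t • T u t := hT u t
    have hNT : mink (N u t) (T u t) = 0 := by rw [mink_comm]; exact hTN u t
    have hB₁T : mink (B₁ u t) (T u t) = 0 := by rw [mink_comm]; exact hTB₁ u t
    have hB₂T : mink (B₂ u t) (T u t) = 0 := by rw [mink_comm]; exact hTB₂ u t
    have hmW : mink W (γu t) = v u t * (deriv (fun y => α₁ y t) u - α₄ u t * v u t) := by
      rw [hγuT, hWdef]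
      rw [mink_comm, mink_smul_left, mink_comm]
      simp only [mink_add_left, mink_smul_left, hTT, hNT, hB₁T, hB₂T, hk₁]
      ring
    have hderiv : deriv (fun x => v u x) t
        = (2 * mink W (γu t)) / (2 * Real.sqrt (mink (γu t) (γu t))) := by
      rw [hvfun]
      exact hsqrt.deriv
    rw [hderiv, hmW, hsq]
    have hvne : v u t ≠ 0 := (hvpos u t).ne'
    field_simp
  constructor
  · intro h u t
    have h1 := key u t
    rw [h u t] at h1
    linarith
  · intro h u t
    rw [key u t, h u t]
    ring
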